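/- arXiv:1101.4176 — 2 statements merged into one kernel-verified Lean document; each statement's English description precedes it below -/
import Mathlib

section
/- Let {Λ_i}_{i∈ℕ} be a countable system of closed cones in ℝⁿ satisfying the conic qualification condition: whenever x*_i ∈ N(0;Λ_i) for all i ∈ ℕ and the series Σ_{i=1}^∞ x*_i converges to 0, then x*_i = 0 for all i ∈ ℕ. Then, with Λ := ∩_{i=1}^∞ Λ_i, every Fréchet normal to Λ at the origin satisfies N̂(0;Λ) ⊆ cl{Σ_{i∈I} x*_i | x*_i ∈ N(0;Λ_i), I a finite subset of ℕ}. -/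
open Filter Topology Set Metric

section Defs
variable {E : Type*} [NormedAddCommGroup E] [NormedSpace ℝ E]

/-- Bouligand–Severi contingent tangent cone. -/
def tcone (Ω : Set E) (x : E) : Set E :=
  {v | ∃ (t : ℕ → ℝ) (w : ℕ → E), (∀ k, 0 < t k) ∧
    Tendsto t atTop (nhds 0) ∧ Tendsto w atTop (nhds v) ∧ ∀ k, x + t k • w k ∈ Ω}
end Defs

section Defs2
variable {E F : Type*} [NormedAddCommGroup E] [InnerProductSpace ℝ E]
  [NormedAddCommGroup F] [InnerProductSpace ℝ F]

/-- Fréchet (regular/pre-) normal cone. -/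
def fnormal (Ω : Set E) (x : E) : Set E :=
  {v | ∀ ε > 0, ∃ δ > 0, ∀ u ∈ Ω, ‖u - x‖ < δ → (inner ℝ v (u - x) : ℝ) ≤ ε * ‖u - x‖}

/-- Limiting (Mordukhovich) normal cone. -/
def lnormal (Ω : Set E) (x : E) : Set E :=
  {v | ∃ xk vk : ℕ → E, (∀ k, xk k ∈ Ω) ∧ (∀ k, vk k ∈ fnormal Ω (xk k)) ∧
    Tendsto xk atTop (nhds x) ∧ Tendsto vk atTop (nhds v)}

/-- Normal cone of convex analysis. -/
def cnormal (Ω : Set E) (x : E) : Set E :=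
  {v | ∀ y ∈ Ω, (inner ℝ v (y - x) : ℝ) ≤ 0}

/-- All finite sums `∑_{i ∈ I} xᵢ` with `xᵢ ∈ Nc i`. -/
def finSums (Nc : ℕ → Set E) : Set E :=
  {v | ∃ (I : Finset ℕ) (xs : ℕ → E), (∀ i ∈ I, xs i ∈ Nc i) ∧ v = ∑ i ∈ I, xs i}

/-- Fréchet normal cone in a product of inner ℝ product spaces
(equivalently, w.r.t. the Euclidean product structure). -/
def fnormalP (Ω : Set (E × F)) (z : E × F) : Set (E × F) :=
  {v | ∀ ε > 0, ∃ δ > 0, ∀ u ∈ Ω, ‖u - z‖ < δ →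
    (inner ℝ v.1 (u.1 - z.1) : ℝ) + (inner ℝ v.2 (u.2 - z.2) : ℝ) ≤ ε * ‖u - z‖}

/-- Limiting normal cone in a product of inner ℝ product spaces. -/
def lnormalP (Ω : Set (E × F)) (z : E × F) : Set (E × F) :=
  {v | ∃ zk vk : ℕ → E × F, (∀ k, zk k ∈ Ω) ∧ (∀ k, vk k ∈ fnormalP Ω (zk k)) ∧
    Tendsto zk atTop (nhds z) ∧ Tendsto vk atTop (nhds v)}

/-- Epigraph of an extended-real-valued function. -/
def epiSet (φ : E → EReal) : Set (E × ℝ) := {p | φ p.1 ≤ (p.2 : EReal)}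

/-- Basic (limiting, Mordukhovich) subdifferential. -/
noncomputable def bsub (φ : E → EReal) (x : E) : Set E :=
  {v | (v, (-1 : ℝ)) ∈ lnormalP (epiSet φ) (x, (φ x).toReal)}

/-- Singular subdifferential. -/
noncomputable def ssub (φ : E → EReal) (x : E) : Set E :=
  {v | (v, (0 : ℝ)) ∈ lnormalP (epiSet φ) (x, (φ x).toReal)}

/-- Fréchet subdifferential. -/
def fsub (φ : E → EReal) (x : E) : Set E :=
  {v | ∀ ε > 0, ∃ δ > 0, ∀ u, ‖u - x‖ < δ →
    φ x + (((inner ℝ v (u - x) : ℝ) - ε * ‖u - x‖ : ℝ) : EReal) ≤ φ u}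

/-- Fréchet upper subdifferential `∂̂⁺φ(x) = −∂̂(−φ)(x)`. -/
def fsubUpper (φ : E → EReal) (x : E) : Set E := {v | -v ∈ fsub (fun u => -(φ u)) x}
end Defs2

open scoped RealInnerProductSpace

section Aux
variable {E : Type*} [NormedAddCommGroup E] [InnerProductSpace ℝ E]

lemma zero_mem_fnormal (Ω : Set E) (x : E) : (0 : E) ∈ fnormal Ω x := by
  intro ε hε
  refine ⟨1, one_pos, fun u hu _ => ?_⟩
  simp only [inner_zero_left]
  positivity

lemma fnormal_smul {Ω : Set E} {x z : E} (hz : z ∈ fnormal Ω x) {c : ℝ} (hc : 0 ≤ c) :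
    c • z ∈ fnormal Ω x := by
  rcases hc.eq_or_lt with h0 | hc
  · rw [← h0, zero_smul]; exact zero_mem_fnormal Ω x
  · intro ε hε
    obtain ⟨δ, hδ, h⟩ := hz (ε / c) (by positivity)
    refine ⟨δ, hδ, fun u hu hd => ?_⟩
    have h1 := h u hu hd
    have h2 : (inner ℝ (c • z) (u - x) : ℝ) = c * inner ℝ z (u - x) := real_inner_smul_left _ _ _
    rw [h2]
    have h3 := mul_le_mul_of_nonneg_left h1 hc.le
    calc c * (inner ℝ z (u - x) : ℝ) ≤ c * (ε / c * ‖u - x‖) := h3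
      _ = ε * ‖u - x‖ := by field_simp

lemma prox_normal {Ω : Set E} {x w : E}
    (hnear : ∀ u ∈ Ω, dist x w ≤ dist x u) :
    x - w ∈ fnormal Ω w := by
  intro ε hε
  refine ⟨2 * ε, by positivity, fun u hu hd => ?_⟩
  have h1 : ‖x - w‖ ≤ ‖x - u‖ := by
    have := hnear u hu; rwa [dist_eq_norm, dist_eq_norm] at this
  have h2 : ‖x - u‖ ^ 2 = ‖x - w‖ ^ 2 - 2 * ⟪x - w, u - w⟫ + ‖u - w‖ ^ 2 := by
    have h3 : x - u = (x - w) - (u - w) := by abel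
    rw [h3, norm_sub_sq_real]
  have h4 : ‖x - w‖ ^ 2 ≤ ‖x - u‖ ^ 2 := pow_le_pow_left₀ (norm_nonneg _) h1 2
  nlinarith [norm_nonneg (u - w)]

lemma fnormal_cone_smul_base {Ω : Set E} (hΩ : ∀ v ∈ Ω, ∀ c : ℝ, 0 ≤ c → c • v ∈ Ω)
    {w z : E} (hz : z ∈ fnormal Ω w) {t : ℝ} (ht : 0 < t) :
    z ∈ fnormal Ω (t • w) := by
  intro ε hε
  obtain ⟨δ, hδ, h⟩ := hz ε hε
  refine ⟨t * δ, by positivity, fun u hu hd => ?_⟩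
  have hu' : t⁻¹ • u ∈ Ω := hΩ u hu t⁻¹ (by positivity)
  have key : t⁻¹ • u - w = t⁻¹ • (u - t • w) := by
    rw [smul_sub, smul_smul]
    rw [inv_mul_cancel₀ ht.ne', one_smul]
  have hn : ‖t⁻¹ • u - w‖ = t⁻¹ * ‖u - t • w‖ := by
    rw [key, norm_smul, Real.norm_eq_abs, abs_of_pos (inv_pos.2 ht)]
  have hd' : ‖t⁻¹ • u - w‖ < δ := by
    rw [hn]
    rw [inv_mul_lt_iff₀ ht]
    linarith
  have h1 := h _ hu' hd'
  rw [key, real_inner_smul_right] at h1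
  have hn2 : ‖t⁻¹ • (u - t • w)‖ = t⁻¹ * ‖u - t • w‖ := by
    rw [norm_smul, Real.norm_eq_abs, abs_of_pos (inv_pos.2 ht)]
  rw [hn2] at h1
  have h2 := mul_le_mul_of_nonneg_left h1 ht.le
  have e1 : t * (t⁻¹ * (inner ℝ z (u - t • w) : ℝ)) = inner ℝ z (u - t • w) := by
    field_simp
  have e2 : t * (ε * (t⁻¹ * ‖u - t • w‖)) = ε * ‖u - t • w‖ := by
    field_simp
  rw [e1, e2] at h2
  exact h2

lemma fnormal_mem_lnormal_zero {Ω : Set E}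
    (hΩ : ∀ v ∈ Ω, ∀ c : ℝ, 0 ≤ c → c • v ∈ Ω)
    {w z : E} (hw : w ∈ Ω) (hz : z ∈ fnormal Ω w) :
    z ∈ lnormal Ω 0 := by
  refine ⟨fun k => (1 / (k + 1 : ℝ)) • w, fun _ => z,
    fun k => hΩ w hw _ (by positivity),
    fun k => fnormal_cone_smul_base hΩ hz (by positivity), ?_, tendsto_const_nhds⟩
  have h1 : Tendsto (fun k : ℕ => (1 / (k + 1 : ℝ))) atTop (nhds 0) :=
    tendsto_one_div_add_atTop_nhds_zero_nat
  simpa using h1.smul_const w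

lemma inner_nearest_nonneg {Ω : Set E} (hΩ : ∀ v ∈ Ω, ∀ c : ℝ, 0 ≤ c → c • v ∈ Ω)
    {x w : E} (hw : w ∈ Ω) (hnear : ∀ u ∈ Ω, dist x w ≤ dist x u) :
    0 ≤ (inner ℝ (x - w) w : ℝ) := by
  by_contra hneg
  push_neg at hneg
  set c : ℝ := inner ℝ (x - w) w with hc
  have hw0 : w ≠ 0 := by
    rintro rfl
    rw [hc] at hneg
    simp at hneg
  have hw2 : (0:ℝ) < ‖w‖ ^ 2 := pow_pos (norm_pos_iff.2 hw0) 2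
  set t : ℝ := min 1 (-c / ‖w‖ ^ 2) with htdef
  have ht0 : 0 < t := lt_min one_pos (div_pos (by linarith) hw2)
  have ht1 : t ≤ 1 := min_le_left _ _
  have ht2 : t ≤ -c / ‖w‖ ^ 2 := min_le_right _ _
  have hmem : (1 - t) • w ∈ Ω := hΩ w hw _ (by linarith)
  have h1 := hnear _ hmem
  rw [dist_eq_norm, dist_eq_norm] at h1
  have h2 : x - (1 - t) • w = (x - w) + t • w := by
    rw [sub_smul, one_smul]; abel
  have h3 : ‖x - (1 - t) • w‖ ^ 2 = ‖x - w‖ ^ 2 + 2 * (t * c) + t ^ 2 * ‖w‖ ^ 2 := by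
    rw [h2, norm_add_sq_real, real_inner_smul_right, norm_smul, Real.norm_eq_abs,
      abs_of_pos ht0, mul_pow, hc]
  have h4 : ‖x - w‖ ^ 2 ≤ ‖x - (1 - t) • w‖ ^ 2 := pow_le_pow_left₀ (norm_nonneg _) h1 2
  have h5 : t * ‖w‖ ^ 2 ≤ -c := (le_div_iff₀ hw2).1 ht2
  nlinarith [mul_le_mul_of_nonneg_left h5 ht0.le, mul_pos ht0 (neg_pos.2 hneg)]

lemma polar_of_fnormal_zero {Ω : Set E} (hΩ : ∀ u ∈ Ω, ∀ c : ℝ, 0 ≤ c → c • u ∈ Ω)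
    {v : E} (hv : v ∈ fnormal Ω 0) {u : E} (hu : u ∈ Ω) :
    (inner ℝ v u : ℝ) ≤ 0 := by
  rcases eq_or_ne u 0 with rfl | hu0
  · simp
  have hun : (0:ℝ) < ‖u‖ := norm_pos_iff.2 hu0
  have key : ∀ ε : ℝ, 0 < ε → (inner ℝ v u : ℝ) ≤ ε * ‖u‖ := by
    intro ε hε
    obtain ⟨δ, hδ, h⟩ := hv ε hε
    set t : ℝ := δ / (2 * ‖u‖) with htdef
    have ht0 : 0 < t := by positivity
    have htu : t • u ∈ Ω := hΩ u hu t ht0.le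
    have hnn : ‖t • u - 0‖ = t * ‖u‖ := by
      rw [sub_zero, norm_smul, Real.norm_eq_abs, abs_of_pos ht0]
    have hlt : ‖t • u - 0‖ < δ := by
      rw [hnn, htdef]
      rw [div_mul_eq_mul_div, mul_comm]
      rw [div_lt_iff₀ (by positivity)]
      nlinarith
    have h1 := h (t • u) htu hlt
    rw [sub_zero, real_inner_smul_right] at h1
    have hns : ‖t • u‖ = t * ‖u‖ := by
      rw [norm_smul, Real.norm_eq_abs, abs_of_pos ht0]
    rw [hns] at h1
    have h2 := mul_le_mul_of_nonneg_left h1 (le_of_lt (inv_pos.2 ht0))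
    rw [← mul_assoc, inv_mul_cancel₀ ht0.ne', one_mul] at h2
    calc (inner ℝ v u : ℝ) ≤ t⁻¹ * (ε * (t * ‖u‖)) := h2
      _ = ε * ‖u‖ := by field_simp
  by_contra hpos
  push_neg at hpos
  have h3 := key ((inner ℝ v u : ℝ) / (2 * ‖u‖)) (by positivity)
  have h4 : (inner ℝ v u : ℝ) / (2 * ‖u‖) * ‖u‖ = inner ℝ v u / 2 := by
    field_simp
  rw [h4] at h3
  linarith

lemma proj_closed_ball {p u₀ : E}
    (hu₀ : ‖u₀‖ ≤ 1) (hmin : ∀ u : E, ‖u‖ ≤ 1 → ‖u₀ - p‖ ≤ ‖u - p‖) :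
    ∃ lam : ℝ, 0 ≤ lam ∧ p - u₀ = lam • u₀ ∧ (lam ≠ 0 → ‖u₀‖ = 1) := by
  rcases le_or_gt ‖p‖ 1 with hp | hp
  · have h0 := hmin p hp
    have h1 : u₀ = p := by
      have h2 : ‖u₀ - p‖ = 0 := le_antisymm (by simpa using h0) (norm_nonneg _)
      rwa [norm_sub_eq_zero_iff] at h2
    exact ⟨0, le_refl _, by simp [h1], by simp⟩
  · have hp1 : (0:ℝ) < ‖p‖ := by linarith
    have hc : ‖(‖p‖⁻¹ • p)‖ ≤ 1 := by
      rw [norm_smul, Real.norm_eq_abs, abs_of_pos (inv_pos.2 hp1), inv_mul_cancel₀ hp1.ne']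
    have hle := hmin _ hc
    have hcp : ‖‖p‖⁻¹ • p - p‖ = ‖p‖ - 1 := by
      have h2 : ‖p‖⁻¹ • p - p = (‖p‖⁻¹ - 1) • p := by rw [sub_smul, one_smul]
      rw [h2, norm_smul, Real.norm_eq_abs, abs_of_neg (by
        rw [sub_neg]
        rw [inv_lt_one_iff₀]
        right; exact hp), neg_sub, sub_mul, one_mul, inv_mul_cancel₀ hp1.ne']
    have h1 : ‖u₀ - p‖ ≤ ‖p‖ - 1 := hcp ▸ hle
    have h2 : ‖p‖ ≤ ‖p - u₀‖ + ‖u₀‖ := by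
      calc ‖p‖ = ‖(p - u₀) + u₀‖ := by rw [sub_add_cancel]
        _ ≤ ‖p - u₀‖ + ‖u₀‖ := norm_add_le _ _
    have hrev : ‖p - u₀‖ = ‖u₀ - p‖ := norm_sub_rev _ _
    have hnorm1 : ‖u₀‖ = 1 := by
      rw [hrev] at h2
      linarith
    have heq : ‖(p - u₀) + u₀‖ = ‖p - u₀‖ + ‖u₀‖ := by
      rw [sub_add_cancel, hnorm1, hrev]
      linarith
    have hsr : SameRay ℝ u₀ (p - u₀) := (sameRay_iff_norm_add.mpr heq).symm
    have hu00 : u₀ ≠ 0 := by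
      intro h
      rw [h, norm_zero] at hnorm1
      norm_num at hnorm1
    obtain ⟨r, hr, hru⟩ := hsr.exists_nonneg_left hu00
    exact ⟨r, hr, hru.symm, fun _ => hnorm1⟩

end Aux

section Key
variable {E : Type*} [NormedAddCommGroup E] [InnerProductSpace ℝ E] [ProperSpace E]

lemma key_step (Λ : ℕ → Set E) (hcl : ∀ i, IsClosed (Λ i))
    (hcone : ∀ i, (0:E) ∈ Λ i ∧ ∀ v ∈ Λ i, ∀ c : ℝ, 0 ≤ c → c • v ∈ Λ i)
    (v : E) {ρ : ℝ} (hρ : 0 < ρ) :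
    ∃ (u₀ : E) (μ : ℝ), ‖u₀‖ ≤ 1 ∧ 0 ≤ μ ∧
      v - μ • u₀ ∈ closure (finSums fun i => lnormal (Λ i) 0) ∧
      (μ ≠ 0 → ‖u₀‖ = 1 ∧ μ ≤ (inner ℝ v u₀ : ℝ)) ∧
      ρ * (∑' i, (1/2:ℝ)^i * infDist u₀ (Λ i) ^ 2) ≤ (inner ℝ v u₀ : ℝ) := by
  classical
  set a : ℕ → ℝ := fun i => (1/2:ℝ)^i with ha_def
  have ha : Summable a := summable_geometric_two
  have ha_nonneg : ∀ i, 0 ≤ a i := fun i => by positivity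
  have ha_sum : ∑' i, a i = 2 := tsum_geometric_two
  set Φ : E → ℝ := fun u => ∑' i, a i * infDist u (Λ i) ^ 2 with hΦdef
  have hdle : ∀ (u : E) i, infDist u (Λ i) ≤ ‖u‖ := by
    intro u i
    have := infDist_le_dist_of_mem (s := Λ i) (x := u) (hcone i).1
    simpa [dist_zero_right] using this
  have hΦs : ∀ u : E, Summable (fun i => a i * infDist u (Λ i) ^ 2) := by
    intro u
    refine Summable.of_nonneg_of_le (fun i => by positivity) (fun i => ?_) (ha.mul_right (‖u‖^2))
    exact mul_le_mul_of_nonneg_left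
      (pow_le_pow_left₀ infDist_nonneg (hdle u i) 2) (ha_nonneg i)
  set f : E → ℝ := fun u => -(inner ℝ v u : ℝ) + ρ * Φ u with hfdef
  have hΦcont : ContinuousOn Φ (closedBall (0:E) 1) := by
    refine continuousOn_tsum (u := a)
      (fun i => (continuousOn_const.mul (((continuous_infDist_pt (Λ i)).continuousOn).pow 2)))
      ha (fun i x hx => ?_)
    have hx1 : ‖x‖ ≤ 1 := mem_closedBall_zero_iff.1 hx
    have hd1 : infDist x (Λ i) ≤ 1 := (hdle x i).trans hx1
    have hd2 : infDist x (Λ i) ^ 2 ≤ 1 := by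
      nlinarith [infDist_nonneg (s := Λ i) (x := x)]
    have : a i * infDist x (Λ i) ^ 2 ≤ a i := mul_le_of_le_one_right (ha_nonneg i) hd2
    rw [Real.norm_eq_abs, abs_of_nonneg (by positivity)]
    exact this
  have hfc : ContinuousOn f (closedBall (0:E) 1) := by
    refine ContinuousOn.add ?_ (continuousOn_const.mul hΦcont)
    exact ((continuous_const.inner continuous_id).neg).continuousOn
  obtain ⟨u₀, hu₀mem, hminOn⟩ := (isCompact_closedBall (0:E) 1).exists_isMinOn
    ⟨0, mem_closedBall_self zero_le_one⟩ hfc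
  have hu₀ : ‖u₀‖ ≤ 1 := mem_closedBall_zero_iff.1 hu₀mem
  have hmin : ∀ u : E, ‖u‖ ≤ 1 → f u₀ ≤ f u := fun u hu =>
    hminOn (mem_closedBall_zero_iff.2 hu)
  -- nearest points
  have hW : ∀ i, ∃ y ∈ Λ i, infDist u₀ (Λ i) = dist u₀ y := fun i =>
    (hcl i).exists_infDist_eq_dist ⟨0, (hcone i).1⟩ u₀
  choose w hwΛ hwd using hW
  have hnear : ∀ i, ∀ u ∈ Λ i, dist u₀ (w i) ≤ dist u₀ u := by
    intro i u hu
    rw [← hwd i]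
    exact infDist_le_dist_of_mem hu
  have hwu : ∀ i, ‖u₀ - w i‖ ≤ 1 := by
    intro i
    have h1 : dist u₀ (w i) ≤ dist u₀ 0 := hnear i 0 (hcone i).1
    calc ‖u₀ - w i‖ = dist u₀ (w i) := (dist_eq_norm _ _).symm
      _ ≤ dist u₀ 0 := h1
      _ = ‖u₀‖ := dist_zero_right u₀
      _ ≤ 1 := hu₀
  have hwb : ∀ i, ‖w i‖ ≤ 2 := by
    intro i
    have h2 : w i = u₀ - (u₀ - w i) := by abel
    rw [h2]
    calc ‖u₀ - (u₀ - w i)‖ ≤ ‖u₀‖ + ‖u₀ - w i‖ := norm_sub_le _ _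
      _ ≤ 2 := by linarith [hwu i]
  have hS1 : Summable (fun i => a i • (u₀ - w i)) := by
    refine Summable.of_norm_bounded ha (fun i => ?_)
    rw [norm_smul, Real.norm_eq_abs, abs_of_nonneg (ha_nonneg i)]
    exact mul_le_of_le_one_right (ha_nonneg i) (hwu i)
  have hS2 : Summable (fun i => a i • w i) := by
    refine Summable.of_norm_bounded (ha.mul_right 2) (fun i => ?_)
    rw [norm_smul, Real.norm_eq_abs, abs_of_nonneg (ha_nonneg i)]
    exact mul_le_mul_of_nonneg_left (hwb i) (ha_nonneg i)
  set wbar : E := ∑' i, a i • w i with hwbar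
  have hSw2 : Summable (fun i => a i * ‖w i‖ ^ 2) := by
    refine Summable.of_nonneg_of_le (fun i => by positivity) (fun i => ?_) (ha.mul_right 4)
    refine mul_le_mul_of_nonneg_left ?_ (ha_nonneg i)
    nlinarith [hwb i, norm_nonneg (w i)]
  set C : ℝ := ∑' i, a i * ‖w i‖ ^ 2 with hC
  set p : E := (4*ρ)⁻¹ • (v + (2*ρ) • wbar) with hpdef
  have hp : (4*ρ) • p = v + (2*ρ) • wbar := by
    rw [hpdef, smul_smul, mul_inv_cancel₀ (by positivity), one_smul]
  -- the master HasSum identity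
  have H4 : ∀ u : E, HasSum (fun i => a i * ‖u - w i‖ ^ 2)
      (2*‖u‖^2 - 2*(inner ℝ u wbar : ℝ) + C) := by
    intro u
    have H1 : HasSum (fun i => a i * ‖u‖^2) (2 * ‖u‖^2) := by
      have := ha.hasSum.mul_right (‖u‖^2)
      rwa [ha_sum] at this
    have H2 : HasSum (fun i => a i * (inner ℝ u (w i) : ℝ)) ((inner ℝ u wbar : ℝ)) := by
      have := (innerSL ℝ u).hasSum hS2.hasSum
      simpa using this
    have H3 : HasSum (fun i => a i * ‖w i‖ ^ 2) C := hSw2.hasSum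
    have H := (H1.sub (H2.mul_left 2)).add H3
    have e : (fun i => a i * ‖u - w i‖ ^ 2) = (fun b => a b * ‖u‖ ^ 2 - 2 * (a b * (inner ℝ u (w b) : ℝ)) + a b * ‖w b‖ ^ 2) := by
      funext i
      rw [norm_sub_sq_real]
      ring
    rw [e]; exact H
  -- quadratic form
  have hQ : ∀ u : E, -(inner ℝ v u : ℝ) + ρ * (2*‖u‖^2 - 2*(inner ℝ u wbar : ℝ) + C)
      = 2*ρ*‖u - p‖^2 + (ρ*C - 2*ρ*‖p‖^2) := by
    intro u
    have h1 : ‖u - p‖^2 = ‖u‖^2 - 2*(inner ℝ u p : ℝ) + ‖p‖^2 := norm_sub_sq_real u p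
    have h2 : (inner ℝ u ((4*ρ) • p) : ℝ) = inner ℝ u v + 2*ρ*(inner ℝ u wbar : ℝ) := by
      rw [hp, inner_add_right, real_inner_smul_right]
    rw [real_inner_smul_right] at h2
    have h3 : (inner ℝ v u : ℝ) = inner ℝ u v := real_inner_comm u v
    rw [h1, h3]
    linear_combination h2
  have hfle : ∀ u : E, f u ≤ 2*ρ*‖u - p‖^2 + (ρ*C - 2*ρ*‖p‖^2) := by
    intro u
    rw [← hQ u]
    have hle : Φ u ≤ ∑' i, a i * ‖u - w i‖ ^ 2 := by
      refine Summable.tsum_le_tsum (fun i => ?_) (hΦs u) (H4 u).summable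
      refine mul_le_mul_of_nonneg_left ?_ (ha_nonneg i)
      have hid : infDist u (Λ i) ≤ ‖u - w i‖ := by
        rw [← dist_eq_norm]
        exact infDist_le_dist_of_mem (hwΛ i)
      exact pow_le_pow_left₀ infDist_nonneg hid 2
    rw [(H4 u).tsum_eq] at hle
    have := mul_le_mul_of_nonneg_left hle hρ.le
    simp only [hfdef]
    linarith
  have hfeq : f u₀ = 2*ρ*‖u₀ - p‖^2 + (ρ*C - 2*ρ*‖p‖^2) := by
    rw [← hQ u₀]
    have heq : Φ u₀ = ∑' i, a i * ‖u₀ - w i‖ ^ 2 := by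
      refine tsum_congr (fun i => ?_)
      rw [hwd i, dist_eq_norm]
    simp only [hfdef]
    rw [heq, (H4 u₀).tsum_eq]
  have hmin2 : ∀ u : E, ‖u‖ ≤ 1 → ‖u₀ - p‖ ≤ ‖u - p‖ := by
    intro u hu
    have h1 : f u₀ ≤ f u := hmin u hu
    have h2 := hfle u
    rw [hfeq] at h1
    have h5 : ‖u₀ - p‖^2 ≤ ‖u - p‖^2 := by nlinarith
    nlinarith [norm_nonneg (u₀ - p), norm_nonneg (u - p)]
  obtain ⟨lam, hlam0, hlameq, hlam1⟩ := proj_closed_ball hu₀ hmin2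
  set μ : ℝ := 4*ρ*lam with hμdef
  have hμ0 : 0 ≤ μ := by positivity
  have hveq : v = (4*ρ) • u₀ - (2*ρ) • wbar + μ • u₀ := by
    have h1 : p = u₀ + lam • u₀ := by
      rw [← hlameq]; abel
    have h2 : (4*ρ) • p = (4*ρ) • u₀ + μ • u₀ := by
      rw [h1, smul_add, smul_smul, hμdef]
    rw [hp] at h2
    have h3 : v = (4*ρ) • u₀ + μ • u₀ - (2*ρ) • wbar := by
      rw [← h2]; abel
    rw [h3]; abel
  have hT : HasSum (fun i => a i • (u₀ - w i)) ((2:ℝ) • u₀ - wbar) := by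
    have hsum_u₀ : HasSum (fun i => a i • u₀) ((2:ℝ) • u₀) := by
      have := ha.hasSum.smul_const u₀
      rwa [ha_sum] at this
    have := hsum_u₀.sub hS2.hasSum
    convert this using 1
    funext i
    rw [smul_sub]
  have hT2 : HasSum (fun i => ((2*ρ) * a i) • (u₀ - w i)) (v - μ • u₀) := by
    have h := hT.const_smul (2*ρ)
    have he : (2*ρ) • ((2:ℝ) • u₀ - wbar) = v - μ • u₀ := by
      rw [hveq, smul_sub, smul_smul]
      match_scalars <;> ring
    rw [he] at h
    convert h using 1
    funext i
    rw [smul_smul]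
  have hmemS : ∀ m, (∑ i ∈ Finset.range m, ((2*ρ) * a i) • (u₀ - w i))
      ∈ finSums (fun i => lnormal (Λ i) 0) := by
    intro m
    refine ⟨Finset.range m, fun i => ((2*ρ) * a i) • (u₀ - w i), fun i _ => ?_, rfl⟩
    have hfn : u₀ - w i ∈ fnormal (Λ i) (w i) := prox_normal (hnear i)
    have hfn2 : ((2*ρ) * a i) • (u₀ - w i) ∈ fnormal (Λ i) (w i) :=
      fnormal_smul hfn (by positivity)
    exact fnormal_mem_lnormal_zero (hcone i).2 (hwΛ i) hfn2
  have hclos : v - μ • u₀ ∈ closure (finSums fun i => lnormal (Λ i) 0) :=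
    mem_closure_of_tendsto hT2.tendsto_sum_nat (Eventually.of_forall hmemS)
  refine ⟨u₀, μ, hu₀, hμ0, hclos, ?_, ?_⟩
  · intro hμne
    have hlamne : lam ≠ 0 := by
      intro h
      exact hμne (by rw [hμdef, h, mul_zero])
    have hn1 : ‖u₀‖ = 1 := hlam1 hlamne
    refine ⟨hn1, ?_⟩
    have hinpos : ∀ i, 0 ≤ (inner ℝ u₀ (u₀ - w i) : ℝ) := by
      intro i
      have hnn : 0 ≤ (inner ℝ (u₀ - w i) (w i) : ℝ) :=
        inner_nearest_nonneg (hcone i).2 (hwΛ i) (hnear i)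
      have e1 : u₀ = (u₀ - w i) + w i := by abel
      have e2 : (inner ℝ (u₀ - w i) u₀ : ℝ)
          = ‖u₀ - w i‖^2 + inner ℝ (u₀ - w i) (w i) := by
        calc (inner ℝ (u₀ - w i) u₀ : ℝ) = inner ℝ (u₀ - w i) ((u₀ - w i) + w i) := by rw [← e1]
          _ = ‖u₀ - w i‖^2 + inner ℝ (u₀ - w i) (w i) := by
              rw [inner_add_right, real_inner_self_eq_norm_sq]
      rw [real_inner_comm, e2]
      positivity
    have H5 := (innerSL ℝ u₀).hasSum hT2
    have hnonneg : 0 ≤ (inner ℝ u₀ (v - μ • u₀) : ℝ) := by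
      refine hasSum_le (fun i => ?_) hasSum_zero H5
      simp only [innerSL_apply_apply]
      rw [real_inner_smul_right]
      exact mul_nonneg (by positivity) (hinpos i)
    have hinner : (inner ℝ v u₀ : ℝ) = inner ℝ (v - μ • u₀) u₀ + μ := by
      rw [inner_sub_left, real_inner_smul_left, real_inner_self_eq_norm_sq, hn1]
      ring
    rw [real_inner_comm] at hnonneg
    linarith [hinner, hnonneg]
  · have h0 : f u₀ ≤ f 0 := hmin 0 (by simp)
    have hΦ0 : Φ 0 = 0 := by
      simp only [hΦdef]
      have : ∀ i, a i * infDist (0:E) (Λ i) ^ 2 = 0 := by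
        intro i
        rw [infDist_zero_of_mem (hcone i).1]
        ring
      rw [tsum_congr this, tsum_zero]
    simp only [hfdef, hΦ0, inner_zero_right, neg_zero, mul_zero, add_zero, zero_add] at h0
    simp only [hΦdef, ha_def] at h0
    linarith

end Key


/-- **Representation of Fréchet normals to countable cone intersections** (Theorem 2.2).
Under the conic qualification condition, every Fréchet normal to `Λ = ⋂ Λᵢ` at the
origin lies in the closure of the set of finite sums of limiting normals to the `Λᵢ`. -/
theorem frechet_normals_to_cone_intersections {n : ℕ}
    (Λ : ℕ → Set (EuclideanSpace ℝ (Fin n)))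
    (hcl : ∀ i, IsClosed (Λ i))
    (hcone : ∀ i, (0 : EuclideanSpace ℝ (Fin n)) ∈ Λ i ∧
      ∀ v ∈ Λ i, ∀ c : ℝ, 0 ≤ c → c • v ∈ Λ i)
    (hQC : ∀ xs : ℕ → EuclideanSpace ℝ (Fin n),
      (∀ i, xs i ∈ lnormal (Λ i) 0) →
      Tendsto (fun m => ∑ i ∈ Finset.range m, xs i) atTop (nhds 0) →
      ∀ i, xs i = 0) :
    fnormal (⋂ i, Λ i) 0 ⊆ closure (finSums fun i => lnormal (Λ i) 0) := by
  classical
  intro v hv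
  by_contra hvS
  have h2 : v ∉ closure (closure (finSums fun i => lnormal (Λ i) 0)) := by
    rwa [closure_closure]
  rw [Metric.mem_closure_iff] at h2
  push_neg at h2
  obtain ⟨ε, hε, hsep⟩ := h2
  -- polar property
  have hconeI : ∀ u ∈ ⋂ i, Λ i, ∀ c : ℝ, 0 ≤ c → c • u ∈ ⋂ i, Λ i := by
    intro u hu c hc
    rw [mem_iInter] at hu ⊢
    exact fun i => (hcone i).2 u (hu i) c hc
  have hpolar : ∀ u ∈ ⋂ i, Λ i, (inner ℝ v u : ℝ) ≤ 0 := by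
    intro u hu
    exact polar_of_fnormal_zero hconeI hv hu
  -- apply key lemma for each k
  have hkey : ∀ k : ℕ, ∃ (u₀ : EuclideanSpace ℝ (Fin n)) (μ : ℝ), ‖u₀‖ ≤ 1 ∧ 0 ≤ μ ∧
      v - μ • u₀ ∈ closure (finSums fun i => lnormal (Λ i) 0) ∧
      (μ ≠ 0 → ‖u₀‖ = 1 ∧ μ ≤ (inner ℝ v u₀ : ℝ)) ∧
      ((k:ℝ)+1) * (∑' i, (1/2:ℝ)^i * infDist u₀ (Λ i) ^ 2) ≤ (inner ℝ v u₀ : ℝ) :=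
    fun k => key_step Λ hcl hcone v (ρ := (k:ℝ)+1) (by positivity)
  choose u μ hu1 hμ0 hclos hcase hΦb using hkey
  have hμε : ∀ k, ε ≤ μ k := by
    intro k
    have h3 := hsep _ (hclos k)
    have hd : dist v (v - μ k • u k) = ‖μ k • u k‖ := by
      rw [dist_eq_norm]
      congr 1
      abel
    have hno : ‖μ k • u k‖ ≤ μ k := by
      rw [norm_smul, Real.norm_eq_abs, abs_of_nonneg (hμ0 k)]
      exact mul_le_of_le_one_right (hμ0 k) (hu1 k)
    rw [hd] at h3
    linarith
  have hμne : ∀ k, μ k ≠ 0 := fun k => (lt_of_lt_of_le hε (hμε k)).ne'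
  have hnorm1 : ∀ k, ‖u k‖ = 1 := fun k => (hcase k (hμne k)).1
  have hvi : ∀ k, ε ≤ (inner ℝ v (u k) : ℝ) := fun k =>
    le_trans (hμε k) (hcase k (hμne k)).2
  have hvb : ∀ k, (inner ℝ v (u k) : ℝ) ≤ ‖v‖ := by
    intro k
    calc (inner ℝ v (u k) : ℝ) ≤ ‖v‖ * ‖u k‖ := real_inner_le_norm v (u k)
      _ = ‖v‖ := by rw [hnorm1 k, mul_one]
  have hΦk : ∀ k : ℕ, ((k:ℝ)+1) * (∑' i, (1/2:ℝ)^i * infDist (u k) (Λ i) ^ 2) ≤ ‖v‖ :=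
    fun k => (hΦb k).trans (hvb k)
  have hdle : ∀ (x : EuclideanSpace ℝ (Fin n)) (i : ℕ), infDist x (Λ i) ≤ ‖x‖ := by
    intro x i
    have := infDist_le_dist_of_mem (s := Λ i) (x := x) (hcone i).1
    simpa [dist_zero_right] using this
  have hΦsum : ∀ x : EuclideanSpace ℝ (Fin n), Summable (fun i => (1/2:ℝ)^i * infDist x (Λ i) ^ 2) := by
    intro x
    refine Summable.of_nonneg_of_le (fun i => by positivity) (fun i => ?_)
      (summable_geometric_two.mul_right (‖x‖^2))
    exact mul_le_mul_of_nonneg_left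
      (pow_le_pow_left₀ infDist_nonneg (hdle x i) 2) (by positivity)
  obtain ⟨ub, hubmem, φ, hφmono, hφtend⟩ :=
    (isCompact_closedBall (0:EuclideanSpace ℝ (Fin n)) 1).tendsto_subseq
      (fun k => mem_closedBall_zero_iff.2 (hu1 k))
  have hub : ∀ i, ub ∈ Λ i := by
    intro i
    have hdb : ∀ k : ℕ, infDist (u k) (Λ i) ^ 2 ≤ (2:ℝ)^i * ‖v‖ / ((k:ℝ)+1) := by
      intro k
      have hk1 : (0:ℝ) < (k:ℝ)+1 := by positivity
      have h1 : (1/2:ℝ)^i * infDist (u k) (Λ i) ^ 2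
          ≤ ∑' j, (1/2:ℝ)^j * infDist (u k) (Λ j) ^ 2 :=
        Summable.le_tsum (hΦsum (u k)) i (fun j _ => by positivity)
      have h2 : (∑' j, (1/2:ℝ)^j * infDist (u k) (Λ j) ^ 2) ≤ ‖v‖ / ((k:ℝ)+1) := by
        rw [le_div_iff₀ hk1]
        calc (∑' j, (1/2:ℝ)^j * infDist (u k) (Λ j) ^ 2) * ((k:ℝ)+1)
            = ((k:ℝ)+1) * (∑' j, (1/2:ℝ)^j * infDist (u k) (Λ j) ^ 2) := by ring
          _ ≤ ‖v‖ := hΦk k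
      have h3 : (1/2:ℝ)^i * infDist (u k) (Λ i) ^ 2 ≤ ‖v‖ / ((k:ℝ)+1) := h1.trans h2
      have h4 := mul_le_mul_of_nonneg_left h3 (le_of_lt (by positivity : (0:ℝ) < (2:ℝ)^i))
      calc infDist (u k) (Λ i) ^ 2
          = (2:ℝ)^i * ((1/2:ℝ)^i * infDist (u k) (Λ i) ^ 2) := by
            rw [← mul_assoc, ← mul_pow]
            norm_num
        _ ≤ (2:ℝ)^i * (‖v‖ / ((k:ℝ)+1)) := h4
        _ = (2:ℝ)^i * ‖v‖ / ((k:ℝ)+1) := by ring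
    have t1 : Tendsto (fun k : ℕ => (2:ℝ)^i * ‖v‖ / ((k:ℝ)+1)) atTop (nhds 0) := by
      have := tendsto_one_div_add_atTop_nhds_zero_nat.const_mul ((2:ℝ)^i * ‖v‖)
      simpa [div_eq_mul_inv] using this
    have t2 : Tendsto (fun k : ℕ => (2:ℝ)^i * ‖v‖ / ((φ k : ℝ)+1)) atTop (nhds 0) :=
      t1.comp hφmono.tendsto_atTop
    have h5 : Tendsto (fun k => infDist ((u ∘ φ) k) (Λ i)) atTop
        (nhds (infDist ub (Λ i))) :=
      ((continuous_infDist_pt (Λ i)).tendsto ub).comp hφtend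
    have h6 : infDist ub (Λ i) ^ 2 ≤ 0 :=
      le_of_tendsto_of_tendsto' (h5.pow 2) t2 (fun k => hdb (φ k))
    have h7 : infDist ub (Λ i) = 0 := by
      nlinarith [infDist_nonneg (s := Λ i) (x := ub)]
    exact ((hcl i).mem_iff_infDist_zero ⟨0, (hcone i).1⟩).2 h7
  have h8 : (inner ℝ v ub : ℝ) ≤ 0 := hpolar ub (mem_iInter.2 hub)
  have h9 : Tendsto (fun k => (inner ℝ v ((u ∘ φ) k) : ℝ)) atTop (nhds (inner ℝ v ub : ℝ)) :=
    ((continuous_const.inner continuous_id).tendsto ub).comp hφtend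
  have h10 : ε ≤ (inner ℝ v ub : ℝ) :=
    ge_of_tendsto h9 (Eventually.of_forall (fun k => hvi (φ k)))
  linarith
end

section
/- Let {Ω_i}_{i∈ℕ} be a countable system of closed sets in ℝⁿ with intersection Ω := ∩_{i=1}^∞ Ω_i and let x̄ ∈ Ω. Assume: (1) the system is linearly regular at x̄, i.e., there are a neighborhood U of x̄ and C > 0 with dist(x;Ω) ≤ C sup_{i∈ℕ} dist(x;Ω_i) for all x ∈ U; (2) the family of distance functions {d_{Ω_i}}_{i∈ℕ} is equi-directionally differentiable at x̄. Then for every h ∈ ℝⁿ one has dist(h; T(x̄;Ω)) ≤ C sup_{i∈ℕ} dist(h; T(x̄;Ω_i)), and in particular the system {Ω_i}_{i∈ℕ} satisfies the CHIP at x̄, i.e., T(x̄; ∩_{i=1}^∞ Ω_i) = ∩_{i=1}^∞ T(x̄;Ω_i). -/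
open Filter Topology Set Metric

section Aux

lemma zero_mem_tcone {E : Type*} [NormedAddCommGroup E] [NormedSpace ℝ E]
    {S : Set E} {x : E} (hx : x ∈ S) : (0 : E) ∈ tcone S x :=
  ⟨fun k => 1/(k+1), fun _ => 0, fun k => by positivity,
    tendsto_one_div_add_atTop_nhds_zero_nat, tendsto_const_nhds, fun k => by simpa using hx⟩

lemma dist_quot {E : Type*} [NormedAddCommGroup E] [NormedSpace ℝ E]
    (x h y : E) {t : ℝ} (ht : 0 < t) :
    dist h (t⁻¹ • (y - x)) = (dist (x + t • h) y) / t := by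
  rw [dist_eq_norm, dist_eq_norm]
  have he : h - t⁻¹ • (y - x) = t⁻¹ • (x + t • h - y) := by
    match_scalars <;> field_simp
  rw [he, norm_smul, Real.norm_eq_abs, abs_inv, abs_of_pos ht, inv_mul_eq_div]

lemma tangent_aux {n : ℕ} {S : Set (EuclideanSpace ℝ (Fin n))}
    (hS : IsClosed S) {xb : EuclideanSpace ℝ (Fin n)} (hxb : xb ∈ S)
    (h : EuclideanSpace ℝ (Fin n)) (t : ℕ → ℝ) (ht : ∀ k, 0 < t k)
    (ε : ℕ → ℝ)
    (hb : ∀ k, infDist (xb + t k • h) S ≤ t k * ε k) :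
    ∃ w : ℕ → EuclideanSpace ℝ (Fin n), (∀ k, xb + t k • w k ∈ S) ∧
      ∀ k, dist h (w k) ≤ ε k := by
  have hne : S.Nonempty := ⟨xb, hxb⟩
  choose y hy hyd using fun k => hS.exists_infDist_eq_dist hne (xb + t k • h)
  refine ⟨fun k => (t k)⁻¹ • (y k - xb), fun k => ?_, fun k => ?_⟩
  · have hyk : xb + t k • ((t k)⁻¹ • (y k - xb)) = y k := by
      rw [smul_smul, mul_inv_cancel₀ (ht k).ne', one_smul]; abel
    rw [hyk]; exact hy k
  · rw [dist_quot xb h (y k) (ht k), ← hyd k, div_le_iff₀ (ht k)]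
    calc infDist (xb + t k • h) S ≤ t k * ε k := hb k
      _ = ε k * t k := mul_comm _ _

lemma exists_tangent {n : ℕ} {S : Set (EuclideanSpace ℝ (Fin n))}
    (hS : IsClosed S) {xb : EuclideanSpace ℝ (Fin n)} (hxb : xb ∈ S)
    (h : EuclideanSpace ℝ (Fin n)) (t : ℕ → ℝ) (ht : ∀ k, 0 < t k)
    (ht0 : Tendsto t atTop (nhds 0)) (M : ℝ)
    (hb : ∀ k, infDist (xb + t k • h) S ≤ t k * M) :
    ∃ a ∈ tcone S xb, dist h a ≤ M := by
  obtain ⟨w, hwS, hwd⟩ := tangent_aux hS hxb h t ht (fun _ => M) hb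
  have hwball : ∀ k, w k ∈ closedBall h M := fun k => by
    rw [mem_closedBall, dist_comm]; exact hwd k
  obtain ⟨a, haball, φ, hφ, hφt⟩ := (isCompact_closedBall h M).tendsto_subseq hwball
  refine ⟨a, ⟨t ∘ φ, w ∘ φ, fun k => ht _, ht0.comp hφ.tendsto_atTop, hφt,
    fun k => hwS _⟩, ?_⟩
  rw [dist_comm]; exact haball

lemma mem_tcone {n : ℕ} {S : Set (EuclideanSpace ℝ (Fin n))}
    (hS : IsClosed S) {xb : EuclideanSpace ℝ (Fin n)} (hxb : xb ∈ S)
    (h : EuclideanSpace ℝ (Fin n)) (t : ℕ → ℝ) (ht : ∀ k, 0 < t k)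
    (ht0 : Tendsto t atTop (nhds 0)) (ε : ℕ → ℝ)
    (hε0 : Tendsto ε atTop (nhds 0))
    (hb : ∀ k, infDist (xb + t k • h) S ≤ t k * ε k) :
    h ∈ tcone S xb := by
  obtain ⟨w, hwS, hwd⟩ := tangent_aux hS hxb h t ht ε hb
  refine ⟨t, w, ht, ht0, ?_, hwS⟩
  rw [tendsto_iff_dist_tendsto_zero]
  refine squeeze_zero (fun k => dist_nonneg) (fun k => ?_) hε0
  rw [dist_comm]; exact hwd k

end Aux

/-- **Sufficient conditions for CHIP in terms of linear regularity** (Proposition 3.5).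
If the countable system of closed sets is linearly regular at `x̄` and the distance
functions are equi-directionally differentiable at `x̄`, then the corresponding estimate
holds for the tangent cones and, in particular, the system has the CHIP at `x̄`. -/
theorem CHIP_from_linear_regularity {n : ℕ}
    (Ω : ℕ → Set (EuclideanSpace ℝ (Fin n))) (xb : EuclideanSpace ℝ (Fin n))
    (hcl : ∀ i, IsClosed (Ω i)) (hxb : ∀ i, xb ∈ Ω i)
    (C : ℝ) (hC : 0 < C) (U : Set (EuclideanSpace ℝ (Fin n))) (hU : U ∈ nhds xb)
    (hlinreg : ∀ x ∈ U, infDist x (⋂ i, Ω i) ≤ C * ⨆ i, infDist x (Ω i))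
    (hequi : ∀ h : EuclideanSpace ℝ (Fin n), ∃ d : ℕ → ℝ, ∀ ε > 0, ∃ δ > 0,
      ∀ t : ℝ, 0 < t → t < δ → ∀ i, |infDist (xb + t • h) (Ω i) / t - d i| ≤ ε) :
    (∀ h : EuclideanSpace ℝ (Fin n),
      infDist h (tcone (⋂ i, Ω i) xb) ≤ C * ⨆ i, infDist h (tcone (Ω i) xb)) ∧
    tcone (⋂ i, Ω i) xb = ⋂ i, tcone (Ω i) xb := by
  obtain ⟨r, hr, hrU⟩ := Metric.mem_nhds_iff.mp hU
  have hScl : IsClosed (⋂ i, Ω i) := isClosed_iInter hcl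
  have hxS : xb ∈ ⋂ i, Ω i := mem_iInter.mpr hxb
  -- the directional derivatives are bounded by the tangent-cone distances
  have key : ∀ (h : EuclideanSpace ℝ (Fin n)) (d : ℕ → ℝ),
      (∀ ε > 0, ∃ δ > 0, ∀ t : ℝ, 0 < t → t < δ → ∀ i,
        |infDist (xb + t • h) (Ω i) / t - d i| ≤ ε) →
      ∀ i, d i ≤ infDist h (tcone (Ω i) xb) := by
    intro h d hd i
    have hTne : (tcone (Ω i) xb).Nonempty := ⟨0, zero_mem_tcone (hxb i)⟩
    by_contra hcon
    push_neg at hcon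
    obtain ⟨v, hv, hvd⟩ := (infDist_lt_iff hTne).mp hcon
    obtain ⟨s, u, hspos, hs0, huv, hmem⟩ := hv
    revert hvd
    rw [imp_false, not_lt]
    have goal : d i ≤ dist h v := by
      refine le_of_forall_pos_le_add ?_
      intro ε hε
      obtain ⟨δ, hδ, hq⟩ := hd (ε/2) (by positivity)
      have h1 : ∀ᶠ k in atTop, s k < δ := hs0.eventually_lt_const hδ
      have h2 : ∀ᶠ k in atTop, dist (u k) v < ε/2 :=
        huv.eventually (Metric.ball_mem_nhds v (by positivity))
      obtain ⟨k, hk1, hk2⟩ := (h1.and h2).exists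
      have hq1 := hq (s k) (hspos k) hk1 i
      have hle : infDist (xb + s k • h) (Ω i) ≤ s k * dist h (u k) := by
        calc infDist (xb + s k • h) (Ω i) ≤ dist (xb + s k • h) (xb + s k • u k) :=
              infDist_le_dist_of_mem (hmem k)
          _ = ‖s k • (h - u k)‖ := by rw [dist_eq_norm]; congr 1; rw [smul_sub]; abel
          _ = s k * dist h (u k) := by
              rw [norm_smul, Real.norm_eq_abs, abs_of_pos (hspos k), dist_eq_norm]
      have hq2 : infDist (xb + s k • h) (Ω i) / s k ≤ dist h (u k) := by
        rw [div_le_iff₀ (hspos k)]; linarith [hle, mul_comm (s k) (dist h (u k))]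
      have habs := abs_le.mp hq1
      have : dist h (u k) ≤ dist h v + ε/2 := by
        calc dist h (u k) ≤ dist h v + dist v (u k) := dist_triangle _ _ _
          _ ≤ dist h v + ε/2 := by rw [dist_comm v]; linarith
      linarith [habs.1, habs.2]
    linarith [goal]
  have hbdd : ∀ h : EuclideanSpace ℝ (Fin n),
      BddAbove (range fun i => infDist h (tcone (Ω i) xb)) := by
    intro h
    refine ⟨‖h‖, ?_⟩
    rintro _ ⟨i, rfl⟩
    calc infDist h (tcone (Ω i) xb) ≤ dist h 0 := infDist_le_dist_of_mem (zero_mem_tcone (hxb i))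
      _ = ‖h‖ := by simp
  -- main estimate
  have main : ∀ h : EuclideanSpace ℝ (Fin n),
      infDist h (tcone (⋂ i, Ω i) xb) ≤ C * ⨆ i, infDist h (tcone (Ω i) xb) := by
    intro h
    obtain ⟨d, hd⟩ := hequi h
    have hdle := key h d hd
    set Ms := ⨆ i, infDist h (tcone (Ω i) xb) with hMs
    have hMile : ∀ i, infDist h (tcone (Ω i) xb) ≤ Ms := fun i => le_ciSup (hbdd h) i
    -- for every ε > 0 we get the bound with C*(Ms + ε)
    have step : ∀ ε > 0, infDist h (tcone (⋂ i, Ω i) xb) ≤ C * (Ms + ε) := by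
      intro ε hε
      obtain ⟨δ, hδ, hq⟩ := hd ε hε
      set τ := min δ (r / (‖h‖ + 1)) / 2 with hτ
      have hτpos : 0 < τ := by
        have : 0 < r / (‖h‖ + 1) := by positivity
        positivity
      set t : ℕ → ℝ := fun k => τ * (1/(k+1)) with htdef
      have htpos : ∀ k, 0 < t k := fun k => by positivity
      have ht0 : Tendsto t atTop (nhds 0) := by
        have := tendsto_one_div_add_atTop_nhds_zero_nat.const_mul τ
        simpa [htdef, one_div] using this
      have htle : ∀ k, t k ≤ τ := by
        intro k
        have h1 : (1:ℝ)/(k+1) ≤ 1 := by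
          rw [div_le_one (by positivity)]; linarith [Nat.cast_nonneg (α := ℝ) k]
        calc t k = τ * (1/(k+1)) := rfl
          _ ≤ τ * 1 := by apply mul_le_mul_of_nonneg_left h1 hτpos.le
          _ = τ := mul_one τ
      have htδ : ∀ k, t k < δ := fun k =>
        lt_of_le_of_lt (htle k) (lt_of_lt_of_le (by linarith [min_le_left δ (r / (‖h‖ + 1))] :
          τ < min δ (r / (‖h‖ + 1))) (min_le_left _ _))
      have htU : ∀ k, xb + t k • h ∈ U := by
        intro k
        apply hrU
        rw [mem_ball, dist_eq_norm]
        have : xb + t k • h - xb = t k • h := by abel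
        rw [this, norm_smul, Real.norm_eq_abs, abs_of_pos (htpos k)]
        have hτr : τ * (‖h‖ + 1) < r := by
          have h1 : τ < r / (‖h‖ + 1) :=
            lt_of_lt_of_le (by linarith [min_le_right δ (r / (‖h‖ + 1))] :
              τ < min δ (r / (‖h‖ + 1))) (min_le_right _ _)
          rw [lt_div_iff₀ (by positivity)] at h1
          exact h1
        calc t k * ‖h‖ ≤ τ * ‖h‖ := mul_le_mul_of_nonneg_right (htle k) (norm_nonneg h)
          _ ≤ τ * (‖h‖ + 1) := by nlinarith
          _ < r := hτr
      have hb : ∀ k, infDist (xb + t k • h) (⋂ i, Ω i) ≤ t k * (C * (Ms + ε)) := by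
        intro k
        have h1 := hlinreg _ (htU k)
        have h2 : (⨆ i, infDist (xb + t k • h) (Ω i)) ≤ t k * (Ms + ε) := by
          apply ciSup_le
          intro i
          have h3 := abs_le.mp (hq (t k) (htpos k) (htδ k) i)
          have h4 : infDist (xb + t k • h) (Ω i) / t k ≤ d i + ε := by linarith [h3.2]
          rw [div_le_iff₀ (htpos k)] at h4
          calc infDist (xb + t k • h) (Ω i) ≤ (d i + ε) * t k := h4
            _ ≤ (Ms + ε) * t k := by
                apply mul_le_mul_of_nonneg_right _ (htpos k).le
                linarith [hdle i, hMile i]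
            _ = t k * (Ms + ε) := mul_comm _ _
        calc infDist (xb + t k • h) (⋂ i, Ω i) ≤ C * ⨆ i, infDist (xb + t k • h) (Ω i) := h1
          _ ≤ C * (t k * (Ms + ε)) := mul_le_mul_of_nonneg_left h2 hC.le
          _ = t k * (C * (Ms + ε)) := by ring
      obtain ⟨a, ha, had⟩ := exists_tangent hScl hxS h t htpos ht0 (C * (Ms + ε)) hb
      exact le_trans (infDist_le_dist_of_mem ha) had
    refine le_of_forall_pos_le_add ?_
    intro η hη
    have := step (η / C) (by positivity)
    calc infDist h (tcone (⋂ i, Ω i) xb) ≤ C * (Ms + η / C) := this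
      _ = C * Ms + η := by field_simp
  refine ⟨main, ?_⟩
  apply Subset.antisymm
  · rintro v ⟨t, w, h1, h2, h3, h4⟩
    exact mem_iInter.mpr fun i => ⟨t, w, h1, h2, h3, fun k => mem_iInter.mp (h4 k) i⟩
  · intro h hh
    obtain ⟨d, hd⟩ := hequi h
    have hdle := key h d hd
    have hd0 : ∀ i, d i ≤ 0 := by
      intro i
      have : infDist h (tcone (Ω i) xb) = 0 :=
        infDist_zero_of_mem (mem_iInter.mp hh i)
      linarith [hdle i, this.le]
    -- choose δ's
    have hds := fun j : ℕ => hd (1/(j+1)) (by positivity)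
    choose δ hδpos hδ using hds
    set t : ℕ → ℝ := fun j => min (min (δ j) (r / (‖h‖ + 1))) (1/(j+1)) / 2 with htdef
    have htpos : ∀ j, 0 < t j := by
      intro j
      have h1 : 0 < r / (‖h‖ + 1) := by positivity
      have h2 : (0:ℝ) < 1/(j+1) := by positivity
      have : 0 < min (min (δ j) (r / (‖h‖ + 1))) (1/(j+1)) :=
        lt_min (lt_min (hδpos j) h1) h2
      positivity
    have htle1 : ∀ j, t j ≤ 1/(j+1) := fun j =>
      le_trans (half_le_self (le_min (le_min (hδpos j).le (by positivity)) (by positivity))) (min_le_right _ _)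
    have ht0 : Tendsto t atTop (nhds 0) :=
      squeeze_zero (fun j => (htpos j).le) htle1 tendsto_one_div_add_atTop_nhds_zero_nat
    have htδ : ∀ j, t j < δ j := by
      intro j
      have h1 : min (min (δ j) (r / (‖h‖ + 1))) (1/(j+1)) ≤ δ j :=
        le_trans (min_le_left _ _) (min_le_left _ _)
      have h2 : 0 < min (min (δ j) (r / (‖h‖ + 1))) (1/(j+1)) := by
        have : 0 < r / (‖h‖ + 1) := by positivity
        have h3 : (0:ℝ) < 1/(j+1) := by positivity
        exact lt_min (lt_min (hδpos j) this) h3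
      calc t j < min (min (δ j) (r / (‖h‖ + 1))) (1/(j+1)) := by
            rw [htdef]; exact half_lt_self h2
        _ ≤ δ j := h1
    have htU : ∀ j, xb + t j • h ∈ U := by
      intro j
      apply hrU
      rw [mem_ball, dist_eq_norm]
      have he : xb + t j • h - xb = t j • h := by abel
      rw [he, norm_smul, Real.norm_eq_abs, abs_of_pos (htpos j)]
      have h1 : t j ≤ r / (‖h‖ + 1) := by
        have h2 : min (min (δ j) (r / (‖h‖ + 1))) (1/(j+1)) ≤ r / (‖h‖ + 1) :=
          le_trans (min_le_left _ _) (min_le_right _ _)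
        have h3 : 0 ≤ min (min (δ j) (r / (‖h‖ + 1))) (1/(j+1)) := by
          have : 0 < r / (‖h‖ + 1) := by positivity
          have h4 : (0:ℝ) < 1/(j+1) := by positivity
          exact (lt_min (lt_min (hδpos j) this) h4).le
        exact le_trans (half_le_self h3) h2
      have h5 : t j * (‖h‖ + 1) ≤ r := by
        rw [div_eq_mul_inv] at h1
        have hpos : (0:ℝ) < ‖h‖ + 1 := by positivity
        calc t j * (‖h‖ + 1) ≤ r / (‖h‖ + 1) * (‖h‖ + 1) :=
              mul_le_mul_of_nonneg_right (by rw [div_eq_mul_inv]; exact h1) hpos.le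
          _ = r := div_mul_cancel₀ r hpos.ne'
      nlinarith [norm_nonneg h, htpos j]
    have hb : ∀ j, infDist (xb + t j • h) (⋂ i, Ω i) ≤ t j * (C * (1/(j+1))) := by
      intro j
      have h1 := hlinreg _ (htU j)
      have h2 : (⨆ i, infDist (xb + t j • h) (Ω i)) ≤ t j * (1/(j+1)) := by
        apply ciSup_le
        intro i
        have h3 := abs_le.mp (hδ j (t j) (htpos j) (htδ j) i)
        have h4 : infDist (xb + t j • h) (Ω i) / t j ≤ d i + 1/(j+1) := by linarith [h3.2]
        rw [div_le_iff₀ (htpos j)] at h4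
        calc infDist (xb + t j • h) (Ω i) ≤ (d i + 1/(j+1)) * t j := h4
          _ ≤ (1/(j+1)) * t j := by
              apply mul_le_mul_of_nonneg_right _ (htpos j).le
              linarith [hd0 i]
          _ = t j * (1/(j+1)) := mul_comm _ _
      calc infDist (xb + t j • h) (⋂ i, Ω i) ≤ C * ⨆ i, infDist (xb + t j • h) (Ω i) := h1
        _ ≤ C * (t j * (1/(j+1))) := mul_le_mul_of_nonneg_left h2 hC.le
        _ = t j * (C * (1/(j+1))) := by ring
    have hε0 : Tendsto (fun j : ℕ => C * (1/(j+1))) atTop (nhds 0) := by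
      have := tendsto_one_div_add_atTop_nhds_zero_nat.const_mul C
      simpa using this
    exact mem_tcone hScl hxS h t htpos ht0 _ hε0 hb
end
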